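/- Let g be a real Lie algebra that is two-step solvable, i.e. D²(g) = [[g,g],[g,g]] = 0, and in which all abelian ideals are central. Then g is abelian, i.e. [g,g] = 0. -/
import Mathlib


/-- A real two-step solvable Lie algebra (`D²(g) = 0`) in which all abelian
ideals are central is abelian. -/
theorem twoStepSolvable_with_abelian_ideals_central_is_abelian
    {g : Type*} [LieRing g] [LieAlgebra ℝ g]
    (h2step : LieAlgebra.derivedSeries ℝ g 2 = ⊥)
    (habelian : ∀ I : LieIdeal ℝ g, (∀ a ∈ I, ∀ b ∈ I, ⁅a, b⁆ = (0 : g)) →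
      I ≤ LieAlgebra.center ℝ g) :
    ∀ x y : g, ⁅x, y⁆ = 0 := by
  -- Step 1: the derived ideal is abelian, hence central.
  have hder : LieAlgebra.derivedSeries ℝ g 1 ≤ LieAlgebra.center ℝ g := by
    apply habelian
    intro a ha b hb
    have h : ⁅a, b⁆ ∈ LieAlgebra.derivedSeries ℝ g 2 := by
      rw [LieAlgebra.derivedSeries_def, LieAlgebra.derivedSeriesOfIdeal_succ]
      exact LieSubmodule.lie_mem_lie ha hb
    rw [h2step] at h
    simpa using h
  -- So every bracket is central.
  have hcent : ∀ a b : g, ⁅a, b⁆ ∈ LieAlgebra.center ℝ g := by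
    intro a b
    apply hder
    rw [LieAlgebra.derivedSeries_def, LieAlgebra.derivedSeriesOfIdeal_succ]
    exact LieSubmodule.lie_mem_lie (LieSubmodule.mem_top a) (LieSubmodule.mem_top b)
  intro x y
  -- Step 2: for each x, the span of x plus the center is an abelian ideal.
  let S : Submodule ℝ g := (Submodule.span ℝ {x}) ⊔ (LieAlgebra.center ℝ g).toSubmodule
  have hmem : ∀ a : g, a ∈ S → ∃ c : ℝ, ∃ z ∈ LieAlgebra.center ℝ g, a = c • x + z := by
    intro a ha
    obtain ⟨u, hu, v, hv, rfl⟩ := Submodule.mem_sup.mp ha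
    obtain ⟨c, rfl⟩ := Submodule.mem_span_singleton.mp hu
    exact ⟨c, v, hv, rfl⟩
  let I : LieIdeal ℝ g :=
    { toSubmodule := S
      lie_mem := by
        intro w a ha
        have : ⁅w, a⁆ ∈ (LieAlgebra.center ℝ g).toSubmodule := hcent w a
        exact Submodule.mem_sup_right this }
  have hIab : ∀ a ∈ I, ∀ b ∈ I, ⁅a, b⁆ = (0 : g) := by
    intro a ha b hb
    obtain ⟨c, z, hz, rfl⟩ := hmem a ha
    obtain ⟨c', z', hz', rfl⟩ := hmem b hb
    have hz1 : ∀ w : g, ⁅w, z⁆ = 0 := fun w => (LieModule.mem_maxTrivSubmodule ℝ g g z).mp hz w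
    have hz1' : ∀ w : g, ⁅w, z'⁆ = 0 := fun w => (LieModule.mem_maxTrivSubmodule ℝ g g z').mp hz' w
    have hz2 : ∀ w : g, ⁅z, w⁆ = 0 := by
      intro w; rw [← lie_skew, hz1 w, neg_zero]
    simp [lie_add, add_lie, smul_lie, lie_smul, hz1', hz2, lie_self]
  have hxI : x ∈ I := Submodule.mem_sup_left (Submodule.mem_span_singleton_self x)
  have hxc : x ∈ LieAlgebra.center ℝ g := habelian I hIab hxI
  have := (LieModule.mem_maxTrivSubmodule ℝ g g x).mp hxc y
  rw [← lie_skew, this, neg_zero]
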